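/- Let S and T be standard Borel spaces, let Q be a probability measure on S × T with second-coordinate marginal Q_T, and let Q(dx, dy) = Q_{S|T}(dx | y) Q_T(dy) be its disintegration over the second coordinate. Let λ > 0 and let f : S × T → [0, ∞) be measurable. Then the supremum, over all probability measures P on S × T whose second-coordinate marginal equals Q_T, of ∫ f dP − λ·KL(P‖Q) (interpreted as −∞ when KL(P‖Q) = +∞ and ∫ f dP < ∞) equals λ ∫_T log( ∫_S exp(f(x,y)/λ) Q_{S|T}(dx | y) ) Q_T(dy), as an identity in [0, +∞]. -/

import Mathlib

open MeasureTheory Classical ProbabilityTheory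

/-- Kullback–Leibler divergence, valued in `(-∞, ∞]`. -/
noncomputable def KL {𝒳 : Type*} [MeasurableSpace 𝒳] (P Q : Measure 𝒳) : EReal :=
  if P ≪ Q ∧ Integrable (fun x => Real.log (P.rnDeriv Q x).toReal) P
  then ((∫ x, Real.log (P.rnDeriv Q x).toReal ∂P : ℝ) : EReal)
  else ⊤

/-- Logarithm on `[1, +∞] ⊆ ℝ≥0∞`, valued in `[0, +∞]`. -/
noncomputable def nnlog (x : ENNReal) : ENNReal :=
  if x = ⊤ then ⊤ else ENNReal.ofReal (Real.log x.toReal)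

lemma nnlog_ne_top {x : ENNReal} (hx : x ≠ ⊤) : nnlog x = ENNReal.ofReal (Real.log x.toReal) :=
  if_neg hx

lemma nnlog_eq_top_iff {x : ENNReal} : nnlog x = ⊤ ↔ x = ⊤ := by
  unfold nnlog
  split <;> simp_all [ENNReal.ofReal_ne_top]

lemma ereal_coe_iSup {a : ℕ → ENNReal} (ha : Monotone a) :
    (((⨆ n, a n : ENNReal)) : EReal) = ⨆ n, ((a n : EReal)) := by
  have h1 : Filter.Tendsto a Filter.atTop (nhds (⨆ n, a n)) := tendsto_atTop_iSup ha
  have h2 : Filter.Tendsto (fun n => ((a n : EReal))) Filter.atTop (nhds ((⨆ n, a n : ENNReal) : EReal)) :=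
    (continuous_coe_ennreal_ereal.tendsto _).comp h1
  exact (iSup_eq_of_tendsto (fun n m hnm => EReal.coe_ennreal_le_coe_ennreal_iff.2 (ha hnm)) h2).symm

lemma nnlog_iSup {a : ℕ → ENNReal} (ha : Monotone a) (h1 : ∀ n, 1 ≤ a n) :
    nnlog (⨆ n, a n) = ⨆ n, nnlog (a n) := by
  by_cases htop : (⨆ n, a n) = ⊤
  · rw [htop, nnlog, if_pos rfl]
    have key : ∀ k : ℕ, (k : ENNReal) ≤ ⨆ n, nnlog (a n) := by
      intro k
      obtain ⟨n, hn⟩ := iSup_eq_top.1 htop (ENNReal.ofReal (Real.exp k)) ENNReal.ofReal_lt_top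
      refine le_trans ?_ (le_iSup _ n)
      by_cases hat : a n = ⊤
      · simp [nnlog, hat]
      · rw [nnlog_ne_top hat]
        have hexp : Real.exp k < (a n).toReal :=
          (ENNReal.ofReal_lt_iff_lt_toReal (Real.exp_pos _).le hat).1 hn
        have hlog : (k:ℝ) ≤ Real.log (a n).toReal := by
          have := Real.log_le_log (Real.exp_pos _) hexp.le
          rwa [Real.log_exp] at this
        calc (k : ENNReal) = ENNReal.ofReal (k:ℝ) := by simp
          _ ≤ ENNReal.ofReal (Real.log (a n).toReal) := ENNReal.ofReal_le_ofReal hlog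
    have htop2 : (⨆ k : ℕ, (k : ENNReal)) = ⊤ :=
      iSup_eq_top.2 fun b hb => ENNReal.exists_nat_gt (lt_top_iff_ne_top.1 hb)
    symm
    rw [eq_top_iff, ← htop2]
    exact iSup_le key
  · have hfin : ∀ n, a n ≠ ⊤ := fun n => ne_top_of_le_ne_top htop (le_iSup a n)
    have hmonotoReal : Monotone fun n => (a n).toReal := fun n m hnm =>
      ENNReal.toReal_mono (hfin m) (ha hnm)
    have htend : Filter.Tendsto a Filter.atTop (nhds (⨆ n, a n)) := tendsto_atTop_iSup ha
    have htendR : Filter.Tendsto (fun n => (a n).toReal) Filter.atTop (nhds (⨆ n, a n).toReal) :=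
      (ENNReal.tendsto_toReal htop).comp htend
    have hpos : 0 < (⨆ n, a n).toReal := by
      have : (1:ENNReal) ≤ ⨆ n, a n := le_trans (h1 0) (le_iSup a 0)
      exact ENNReal.toReal_pos (by intro h; simp [h] at this) htop
    have htendlog : Filter.Tendsto (fun n => Real.log (a n).toReal) Filter.atTop
        (nhds (Real.log (⨆ n, a n).toReal)) :=
      ((Real.continuousAt_log hpos.ne').tendsto).comp htendR
    have htendo : Filter.Tendsto (fun n => ENNReal.ofReal (Real.log (a n).toReal)) Filter.atTop
        (nhds (ENNReal.ofReal (Real.log (⨆ n, a n).toReal))) :=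
      (ENNReal.continuous_ofReal.tendsto _).comp htendlog
    rw [nnlog_ne_top htop]
    have hmono' : Monotone fun n => nnlog (a n) := by
      intro n m hnm
      show nnlog (a n) ≤ nnlog (a m)
      rw [nnlog_ne_top (hfin n), nnlog_ne_top (hfin m)]
      refine ENNReal.ofReal_le_ofReal ?_
      have hp : 0 < (a n).toReal := ENNReal.toReal_pos (by have := h1 n; intro h; simp [h] at this) (hfin n)
      exact Real.log_le_log hp (hmonotoReal hnm)
    have : (fun n => nnlog (a n)) = fun n => ENNReal.ofReal (Real.log (a n).toReal) := by
      funext n; exact nnlog_ne_top (hfin n)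
    rw [this] at hmono'
    simp only [this]
    exact (iSup_eq_of_tendsto hmono' htendo).symm

lemma nnlog_mono {a b : ENNReal} (ha : 1 ≤ a) (hab : a ≤ b) : nnlog a ≤ nnlog b := by
  by_cases hb : b = ⊤
  · simp [nnlog, hb]
  · have hatop : a ≠ ⊤ := ne_top_of_le_ne_top hb hab
    rw [nnlog_ne_top hatop, nnlog_ne_top hb]
    refine ENNReal.ofReal_le_ofReal ?_
    have hapos : 0 < a.toReal := ENNReal.toReal_pos (fun h => by simp [h] at ha) hatop
    exact Real.log_le_log hapos (ENNReal.toReal_mono hb hab)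

lemma measurable_nnlog : Measurable nnlog := by
  unfold nnlog
  refine Measurable.ite (measurableSet_singleton ⊤) measurable_const ?_
  exact ENNReal.measurable_ofReal.comp (Real.measurable_log.comp ENNReal.measurable_toReal)

section disint

variable {S T : Type*} [MeasurableSpace S] [MeasurableSpace T]
  (Q : Measure (S × T)) [IsProbabilityMeasure Q] (κ : Kernel T S) [IsMarkovKernel κ]

lemma Q_eq_swap (hκ : ∀ A : Set (S × T), MeasurableSet A →
      Q A = ∫⁻ y, κ y {x | (x, y) ∈ A} ∂(Q.map Prod.snd)) :
    Q = ((Q.map Prod.snd) ⊗ₘ κ).map Prod.swap := by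
  ext A hA
  rw [Measure.map_apply measurable_swap hA, Measure.compProd_apply (measurable_swap hA), hκ A hA]
  congr 1

lemma lintegral_Q (hκ : ∀ A : Set (S × T), MeasurableSet A →
      Q A = ∫⁻ y, κ y {x | (x, y) ∈ A} ∂(Q.map Prod.snd))
    {h : S × T → ENNReal} (hmeas : Measurable h) :
    ∫⁻ z, h z ∂Q = ∫⁻ y, ∫⁻ x, h (x, y) ∂(κ y) ∂(Q.map Prod.snd) := by
  conv_lhs => rw [Q_eq_swap Q κ hκ]
  rw [lintegral_map hmeas measurable_swap,
    Measure.lintegral_compProd (f := fun p => h p.swap) (hmeas.comp measurable_swap)]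
  rfl



lemma tilted_lower (hκ : ∀ A : Set (S × T), MeasurableSet A →
      Q A = ∫⁻ y, κ y {x | (x, y) ∈ A} ∂(Q.map Prod.snd))
    (lam : ℝ) (hlam : 0 < lam)
    (g : S × T → ℝ) (hg : Measurable g) (hg0 : ∀ z, 0 ≤ g z) (c : ℝ) (hc0 : 0 ≤ c)
    (hgc : ∀ z, g z ≤ c)
    (f : S × T → ℝ) (hfmeas : Measurable f) (hf0 : ∀ z, 0 ≤ f z)
    (hfg : ∀ z, lam * g z ≤ f z) :
    ∃ P : Measure (S × T), IsProbabilityMeasure P ∧ P.map Prod.snd = Q.map Prod.snd ∧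
      ((ENNReal.ofReal lam * ∫⁻ y, nnlog (∫⁻ x, ENNReal.ofReal (Real.exp (g (x, y))) ∂(κ y))
          ∂(Q.map Prod.snd) : ENNReal) : EReal)
        ≤ ((∫⁻ z, ENNReal.ofReal (f z) ∂P : ENNReal) : EReal) - (lam : EReal) * KL P Q := by
  haveI : IsProbabilityMeasure (Q.map Prod.snd) :=
    Measure.isProbabilityMeasure_map measurable_snd.aemeasurable
  set ν := Q.map Prod.snd with hν
  set E : S × T → ENNReal := fun z => ENNReal.ofReal (Real.exp (g z)) with hE
  have hEmeas : Measurable E := ENNReal.measurable_ofReal.comp (Real.measurable_exp.comp hg)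
  set Z : T → ENNReal := fun y => ∫⁻ x, E (x, y) ∂(κ y) with hZ
  have hZmeas : Measurable Z :=
    Measurable.lintegral_kernel_prod_right' (f := fun p : T × S => E (p.2, p.1))
      (hEmeas.comp measurable_swap)
  have hZ1 : ∀ y, 1 ≤ Z y := by
    intro y
    calc (1 : ENNReal) = ∫⁻ _, 1 ∂(κ y) := by simp
      _ ≤ Z y := lintegral_mono fun x => by
          simp only [hE]
          rw [show (1:ENNReal) = ENNReal.ofReal 1 by simp]
          exact ENNReal.ofReal_le_ofReal (Real.one_le_exp (hg0 _))
  have hZc : ∀ y, Z y ≤ ENNReal.ofReal (Real.exp c) := by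
    intro y
    calc Z y ≤ ∫⁻ _, ENNReal.ofReal (Real.exp c) ∂(κ y) :=
          lintegral_mono fun x => ENNReal.ofReal_le_ofReal (Real.exp_le_exp.2 (hgc _))
      _ = ENNReal.ofReal (Real.exp c) := by simp
  have hZtop : ∀ y, Z y ≠ ⊤ := fun y => ne_top_of_le_ne_top ENNReal.ofReal_ne_top (hZc y)
  have hZ0 : ∀ y, Z y ≠ 0 := fun y h => by
    have := hZ1 y
    rw [h] at this
    simp at this
  set w : S × T → ENNReal := fun z => E z / Z z.2 with hw
  have hwmeas : Measurable w := hEmeas.div (hZmeas.comp measurable_snd)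
  have hinner : ∀ y, ∫⁻ x, w (x, y) ∂(κ y) = 1 := by
    intro y
    simp only [hw, ENNReal.div_eq_inv_mul]
    have hEy : Measurable fun x : S => E (x, y) :=
      hEmeas.comp (measurable_id.prodMk measurable_const)
    rw [lintegral_const_mul _ hEy]
    exact ENNReal.inv_mul_cancel (hZ0 y) (hZtop y)
  set P := Q.withDensity w with hP
  have hPuniv : P Set.univ = 1 := by
    rw [hP, withDensity_apply _ MeasurableSet.univ, Measure.restrict_univ,
      lintegral_Q Q κ hκ hwmeas]
    simp [hinner]
  haveI hPprob : IsProbabilityMeasure P := ⟨hPuniv⟩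
  have hmarg : P.map Prod.snd = ν := by
    ext B hB
    rw [Measure.map_apply measurable_snd hB, hP,
      withDensity_apply _ (measurable_snd hB), ← lintegral_indicator (measurable_snd hB),
      lintegral_Q Q κ hκ (hwmeas.indicator (measurable_snd hB))]
    have hy : ∀ y, ∫⁻ x, (Prod.snd ⁻¹' B).indicator w (x, y) ∂(κ y)
        = B.indicator (fun _ => (1:ENNReal)) y := by
      intro y
      by_cases hyB : y ∈ B
      · rw [Set.indicator_of_mem hyB]
        rw [show (fun x => (Prod.snd ⁻¹' B).indicator w (x, y)) = fun x => w (x, y) from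
          funext fun x => Set.indicator_of_mem (show (x, y) ∈ Prod.snd ⁻¹' B from hyB) w]
        exact hinner y
      · rw [Set.indicator_of_notMem hyB]
        rw [show (fun x => (Prod.snd ⁻¹' B).indicator w (x, y)) = fun _ => (0:ENNReal) from
          funext fun x => Set.indicator_of_notMem
            (show (x, y) ∉ Prod.snd ⁻¹' B from hyB) w]
        simp
    simp_rw [hy]
    rw [lintegral_indicator hB]
    simp
    rfl
  have hac : P ≪ Q := withDensity_absolutelyContinuous _ _
  have hrn : P.rnDeriv Q =ᵐ[Q] w := Measure.rnDeriv_withDensity Q hwmeas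
  have hrnP : P.rnDeriv Q =ᵐ[P] w := hac.ae_le hrn
  -- pointwise llr formula
  have hllr_eq : (fun z => Real.log ((P.rnDeriv Q) z).toReal)
      =ᵐ[P] fun z => g z - Real.log (Z z.2).toReal := by
    filter_upwards [hrnP] with z hz
    rw [hz]
    have hZr : 0 < (Z z.2).toReal := ENNReal.toReal_pos (hZ0 _) (hZtop _)
    have : (w z).toReal = Real.exp (g z) / (Z z.2).toReal := by
      rw [hw]
      simp only [ENNReal.toReal_div, hE]
      rw [ENNReal.toReal_ofReal (Real.exp_pos _).le]
    rw [this, Real.log_div (Real.exp_pos _).ne' hZr.ne', Real.log_exp]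
  have hlogZ_bdd : ∀ y, 0 ≤ Real.log (Z y).toReal ∧ Real.log (Z y).toReal ≤ c := by
    intro y
    constructor
    · apply Real.log_nonneg
      rw [show (1:ℝ) = (1:ENNReal).toReal by simp]
      exact ENNReal.toReal_mono (hZtop y) (hZ1 y)
    · have h1 : (Z y).toReal ≤ Real.exp c := by
        calc (Z y).toReal ≤ (ENNReal.ofReal (Real.exp c)).toReal :=
              ENNReal.toReal_mono ENNReal.ofReal_ne_top (hZc y)
          _ = Real.exp c := ENNReal.toReal_ofReal (Real.exp_pos _).le
      have h2 := Real.log_le_log (ENNReal.toReal_pos (hZ0 _) (hZtop _)) h1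
      rwa [Real.log_exp] at h2
  have hllr_meas : Measurable (fun z => Real.log ((P.rnDeriv Q) z).toReal) :=
    Real.measurable_log.comp (Measure.measurable_rnDeriv P Q).ennreal_toReal
  have hint_llr : Integrable (fun z => Real.log ((P.rnDeriv Q) z).toReal) P := by
    refine Integrable.mono' (integrable_const (c + c)) hllr_meas.aestronglyMeasurable ?_
    filter_upwards [hllr_eq] with z hz
    rw [hz, Real.norm_eq_abs]
    have h1 := hg0 z; have h2 := hgc z
    have h3 := (hlogZ_bdd z.2).1; have h4 := (hlogZ_bdd z.2).2
    rw [abs_le]; constructor <;> linarith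
  have hint_g : Integrable g P := by
    refine Integrable.mono' (integrable_const c) hg.aestronglyMeasurable ?_
    filter_upwards with z
    rw [Real.norm_eq_abs, abs_of_nonneg (hg0 z)]; exact hgc z
  have hint_logZsnd : Integrable (fun z : S × T => Real.log (Z z.2).toReal) P := by
    refine Integrable.mono' (integrable_const c) ?_ ?_
    · exact ((Real.measurable_log.comp hZmeas.ennreal_toReal).comp
        measurable_snd).aestronglyMeasurable
    · filter_upwards with z
      rw [Real.norm_eq_abs, abs_of_nonneg (hlogZ_bdd z.2).1]; exact (hlogZ_bdd z.2).2
  have hℓmeas : Measurable fun y => Real.log (Z y).toReal :=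
    Real.measurable_log.comp hZmeas.ennreal_toReal
  have hint_logZ : Integrable (fun y => Real.log (Z y).toReal) ν := by
    rw [← hmarg]
    rw [integrable_map_measure hℓmeas.aestronglyMeasurable measurable_snd.aemeasurable]
    exact hint_logZsnd
  have hKL : KL P Q = ((∫ z, Real.log ((P.rnDeriv Q) z).toReal ∂P : ℝ) : EReal) := by
    rw [KL, if_pos ⟨hac, hint_llr⟩]
  have hL_eq : ∫ z, Real.log ((P.rnDeriv Q) z).toReal ∂P
      = ∫ z, g z ∂P - ∫ y, Real.log (Z y).toReal ∂ν := by
    rw [integral_congr_ae hllr_eq, integral_sub hint_g hint_logZsnd]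
    congr 1
    rw [← hmarg, integral_map measurable_snd.aemeasurable hℓmeas.aestronglyMeasurable]
  have hN_eq : (∫⁻ y, nnlog (Z y) ∂ν : ENNReal)
      = ENNReal.ofReal (∫ y, Real.log (Z y).toReal ∂ν) := by
    rw [ofReal_integral_eq_lintegral_ofReal hint_logZ
      (Filter.Eventually.of_forall fun y => (hlogZ_bdd y).1)]
    refine lintegral_congr fun y => ?_
    rw [nnlog_ne_top (hZtop y)]
  refine ⟨P, hPprob, hmarg, ?_⟩
  set Iℓ := ∫ y, Real.log (Z y).toReal ∂ν with hIℓ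
  have hIℓ0 : 0 ≤ Iℓ := integral_nonneg fun y => (hlogZ_bdd y).1
  have hLHS : ((ENNReal.ofReal lam * ∫⁻ y, nnlog (Z y) ∂ν : ENNReal) : EReal)
      = ((lam * Iℓ : ℝ) : EReal) := by
    rw [hN_eq, ← ENNReal.ofReal_mul hlam.le, EReal.coe_ennreal_ofReal,
      max_eq_left (by positivity)]
  rw [hLHS, hKL, hL_eq]
  by_cases hfin : (∫⁻ z, ENNReal.ofReal (f z) ∂P : ENNReal) = ⊤
  · rw [hfin]
    rw [EReal.coe_ennreal_top, ← EReal.coe_mul, EReal.top_sub_coe]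
    exact le_top
  · have hf_int : Integrable f P := by
      have := integrable_toReal_of_lintegral_ne_top
        (ENNReal.measurable_ofReal.comp hfmeas).aemeasurable hfin
      refine this.congr (Filter.Eventually.of_forall fun z => ?_)
      exact ENNReal.toReal_ofReal (hf0 z)
    have : (∫⁻ z, ENNReal.ofReal (f z) ∂P : ENNReal) = ENNReal.ofReal (∫ z, f z ∂P) :=
      (ofReal_integral_eq_lintegral_ofReal hf_int
        (Filter.Eventually.of_forall hf0)).symm
    rw [this, EReal.coe_ennreal_ofReal, max_eq_left (integral_nonneg hf0),
      ← EReal.coe_mul, ← EReal.coe_sub, EReal.coe_le_coe_iff]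
    have hgf : lam * ∫ z, g z ∂P ≤ ∫ z, f z ∂P := by
      rw [← integral_const_mul]
      exact integral_mono (hint_g.const_mul lam) hf_int hfg
    nlinarith [hgf]

lemma tilted_upper (hκ : ∀ A : Set (S × T), MeasurableSet A →
      Q A = ∫⁻ y, κ y {x | (x, y) ∈ A} ∂(Q.map Prod.snd))
    (lam : ℝ) (hlam : 0 < lam)
    (f : S × T → ℝ) (hfmeas : Measurable f) (hf0 : ∀ z, 0 ≤ f z)
    (P : Measure (S × T)) (hPprob : IsProbabilityMeasure P)
    (hmarg : P.map Prod.snd = Q.map Prod.snd) :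
    ((∫⁻ z, ENNReal.ofReal (f z) ∂P : ENNReal) : EReal) - (lam : EReal) * KL P Q
      ≤ ((ENNReal.ofReal lam *
          ∫⁻ y, nnlog (∫⁻ x, ENNReal.ofReal (Real.exp (f (x, y) / lam)) ∂(κ y))
            ∂(Q.map Prod.snd) : ENNReal) : EReal) := by
  haveI : IsProbabilityMeasure (Q.map Prod.snd) :=
    Measure.isProbabilityMeasure_map measurable_snd.aemeasurable
  set ν := Q.map Prod.snd with hν
  set g : S × T → ℝ := fun z => f z / lam with hgdef
  have hg : Measurable g := hfmeas.div_const lam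
  have hg0 : ∀ z, 0 ≤ g z := fun z => div_nonneg (hf0 z) hlam.le
  have hfg : f = fun z => lam * g z := by
    funext z; rw [hgdef]; field_simp
  set E : S × T → ENNReal := fun z => ENNReal.ofReal (Real.exp (g z)) with hE
  have hEmeas : Measurable E := ENNReal.measurable_ofReal.comp (Real.measurable_exp.comp hg)
  set Z : T → ENNReal := fun y => ∫⁻ x, E (x, y) ∂(κ y) with hZ
  have hZmeas : Measurable Z :=
    Measurable.lintegral_kernel_prod_right' (f := fun p : T × S => E (p.2, p.1))
      (hEmeas.comp measurable_swap)
  have hZ1 : ∀ y, 1 ≤ Z y := by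
    intro y
    calc (1 : ENNReal) = ∫⁻ _, 1 ∂(κ y) := by simp
      _ ≤ Z y := lintegral_mono fun x => by
          simp only [hE]
          rw [show (1:ENNReal) = ENNReal.ofReal 1 by simp]
          exact ENNReal.ofReal_le_ofReal (Real.one_le_exp (hg0 _))
  have hZ0 : ∀ y, Z y ≠ 0 := fun y h => by
    have := hZ1 y
    rw [h] at this
    simp at this
  -- the target RHS
  by_cases hRtop : (ENNReal.ofReal lam * ∫⁻ y, nnlog (Z y) ∂ν : ENNReal) = ⊤
  · rw [show (∫⁻ y, nnlog (∫⁻ x, ENNReal.ofReal (Real.exp (f (x, y) / lam)) ∂(κ y)) ∂ν)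
        = ∫⁻ y, nnlog (Z y) ∂ν from rfl, hRtop]
    simp
  -- KL infinite case
  by_cases hKLfin : P ≪ Q ∧ Integrable (fun z => Real.log ((P.rnDeriv Q) z).toReal) P
  case neg =>
    rw [show KL P Q = ⊤ from if_neg hKLfin]
    rw [show (lam : EReal) * ⊤ = ⊤ from EReal.coe_mul_top_of_pos hlam]
    rw [show ((∫⁻ z, ENNReal.ofReal (f z) ∂P : ENNReal) : EReal) - ⊤
        = ((∫⁻ z, ENNReal.ofReal (f z) ∂P : ENNReal) : EReal) + ⊥ from rfl]
    rw [EReal.add_bot]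
    exact bot_le
  obtain ⟨hac, hint⟩ := hKLfin
  have hKL : KL P Q = ((∫ z, Real.log ((P.rnDeriv Q) z).toReal ∂P : ℝ) : EReal) :=
    if_pos ⟨hac, hint⟩
  set L := ∫ z, Real.log ((P.rnDeriv Q) z).toReal ∂P with hL
  have hNfin : (∫⁻ y, nnlog (Z y) ∂ν : ENNReal) ≠ ⊤ := by
    intro h
    rw [h, ENNReal.mul_top (by simpa using (ENNReal.ofReal_pos.2 hlam).ne')] at hRtop
    exact hRtop rfl
  have hZaefin : ∀ᵐ y ∂ν, Z y ≠ ⊤ := by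
    filter_upwards [ae_lt_top (measurable_nnlog.comp hZmeas) hNfin] with y hy
    intro h
    have hy' : nnlog (Z y) < ⊤ := hy
    rw [h] at hy'
    simp [nnlog] at hy'
  set ℓ : T → ℝ := fun y => Real.log (Z y).toReal with hℓ
  have hℓmeas : Measurable ℓ := Real.measurable_log.comp hZmeas.ennreal_toReal
  have hℓ0 : ∀ y, 0 ≤ ℓ y := by
    intro y
    by_cases hy : Z y = ⊤
    · simp [hℓ, hy]
    · apply Real.log_nonneg
      rw [show (1:ℝ) = (1:ENNReal).toReal by simp]
      exact ENNReal.toReal_mono hy (hZ1 y)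
  have hlint_eq : ∫⁻ y, ENNReal.ofReal (ℓ y) ∂ν = ∫⁻ y, nnlog (Z y) ∂ν := by
    refine lintegral_congr_ae ?_
    filter_upwards [hZaefin] with y hy
    rw [nnlog_ne_top hy]
  have hint_ℓ : Integrable ℓ ν := by
    refine ⟨hℓmeas.aestronglyMeasurable, ?_⟩
    rw [hasFiniteIntegral_iff_norm]
    have : ∀ y, ENNReal.ofReal ‖ℓ y‖ = ENNReal.ofReal (ℓ y) := fun y => by
      rw [Real.norm_eq_abs, abs_of_nonneg (hℓ0 y)]
    simp_rw [this]
    rw [hlint_eq]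
    exact hNfin.lt_top
  have hN_eq : (∫⁻ y, nnlog (Z y) ∂ν : ENNReal) = ENNReal.ofReal (∫ y, ℓ y ∂ν) := by
    rw [ofReal_integral_eq_lintegral_ofReal hint_ℓ
      (Filter.Eventually.of_forall hℓ0), hlint_eq]
  set w : S × T → ENNReal := P.rnDeriv Q with hwdef
  have hwmeas : Measurable w := Measure.measurable_rnDeriv P Q
  have hPw : Q.withDensity w = P := Measure.withDensity_rnDeriv_eq P Q hac
  set R : S × T → ENNReal := fun z => (E z / Z z.2) * (w z)⁻¹ with hR
  have hRmeas : Measurable R := (hEmeas.div (hZmeas.comp measurable_snd)).mul hwmeas.inv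
  have hIR : ∫⁻ z, R z ∂P ≤ 1 := by
    conv_lhs => rw [← hPw]
    rw [lintegral_withDensity_eq_lintegral_mul Q hwmeas hRmeas]
    have hptwise : ∀ z, (w * R) z ≤ E z / Z z.2 := by
      intro z
      show w z * ((E z / Z z.2) * (w z)⁻¹) ≤ E z / Z z.2
      rw [mul_comm (E z / Z z.2) (w z)⁻¹, ← mul_assoc]
      calc w z * (w z)⁻¹ * (E z / Z z.2) ≤ 1 * (E z / Z z.2) :=
            mul_le_mul_left (ENNReal.mul_inv_le_one _) _
        _ = E z / Z z.2 := one_mul _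
    calc ∫⁻ z, (w * R) z ∂Q ≤ ∫⁻ z, E z / Z z.2 ∂Q := lintegral_mono hptwise
      _ = ∫⁻ y, ∫⁻ x, E (x, y) / Z y ∂(κ y) ∂ν :=
          lintegral_Q Q κ hκ (hEmeas.div (hZmeas.comp measurable_snd))
      _ = ∫⁻ y, Z y / Z y ∂ν := by
          refine lintegral_congr fun y => ?_
          simp only [ENNReal.div_eq_inv_mul]
          have hEy : Measurable fun x : S => E (x, y) :=
            hEmeas.comp (measurable_id.prodMk measurable_const)
          rw [lintegral_const_mul _ hEy]
      _ = ∫⁻ _, 1 ∂ν := by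
          refine lintegral_congr_ae ?_
          filter_upwards [hZaefin] with y hy
          exact ENNReal.div_self (hZ0 y) hy
      _ = 1 := by simp
  have hIRne : ∫⁻ z, R z ∂P ≠ ⊤ := ne_top_of_le_ne_top ENNReal.one_ne_top hIR
  have hRfin : ∀ᵐ z ∂P, R z < ⊤ := ae_lt_top hRmeas hIRne
  set r : S × T → ℝ := fun z => (R z).toReal with hr
  have hr_int : Integrable r P := integrable_toReal_of_lintegral_ne_top hRmeas.aemeasurable hIRne
  have hr1 : ∫ z, r z ∂P ≤ 1 := by
    rw [hr, integral_toReal hRmeas.aemeasurable hRfin]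
    calc (∫⁻ z, R z ∂P).toReal ≤ (1 : ENNReal).toReal :=
          ENNReal.toReal_mono ENNReal.one_ne_top hIR
      _ = 1 := by simp
  have hwpos : ∀ᵐ z ∂P, 0 < w z := Measure.rnDeriv_pos hac
  have hwfin : ∀ᵐ z ∂P, w z < ⊤ := hac.ae_le (Measure.rnDeriv_lt_top P Q)
  have hZsndfin : ∀ᵐ z ∂P, Z z.2 ≠ ⊤ := by
    have hpre : P (Prod.snd ⁻¹' {y | Z y = ⊤}) = 0 := by
      have hms : MeasurableSet {y | Z y = ⊤} := hZmeas (measurableSet_singleton ⊤)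
      rw [← Measure.map_apply measurable_snd hms, hmarg]
      have := ae_iff.1 hZaefin
      simpa [not_not] using this
    rw [ae_iff]
    have hset : {z : S × T | ¬ Z z.2 ≠ ⊤} = Prod.snd ⁻¹' {y | Z y = ⊤} := by
      ext z; simp [not_not]
    rw [hset]
    exact hpre
  have hkey : ∀ᵐ z ∂P, g z ≤ ℓ z.2 + Real.log ((P.rnDeriv Q) z).toReal + (r z - 1) := by
    filter_upwards [hwpos, hwfin, hZsndfin] with z h1 h2 h3
    set W := (w z).toReal with hW
    have hWpos : 0 < W := ENNReal.toReal_pos h1.ne' h2.ne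
    have hZr1 : (1:ℝ) ≤ (Z z.2).toReal := by
      rw [show (1:ℝ) = (1:ENNReal).toReal by simp]
      exact ENNReal.toReal_mono h3 (hZ1 z.2)
    have hZrpos : 0 < (Z z.2).toReal := lt_of_lt_of_le one_pos hZr1
    have hrval : r z = Real.exp (g z) / (Z z.2).toReal * W⁻¹ := by
      rw [hr]
      show (((E z / Z z.2) * (w z)⁻¹ : ENNReal)).toReal = _
      rw [ENNReal.toReal_mul, ENNReal.toReal_div, ENNReal.toReal_inv]
      congr 2
      rw [hE]
      exact ENNReal.toReal_ofReal (Real.exp_pos _).le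
    have htpos : 0 < r z := by
      rw [hrval]
      positivity
    have hlogr := Real.log_le_sub_one_of_pos htpos
    have hlogval : Real.log (r z) = g z - Real.log (Z z.2).toReal - Real.log W := by
      rw [hrval, Real.log_mul (by positivity) (by positivity),
        Real.log_div (Real.exp_pos _).ne' hZrpos.ne', Real.log_exp, Real.log_inv]
      ring
    rw [hlogval] at hlogr
    have : Real.log ((P.rnDeriv Q) z).toReal = Real.log W := rfl
    rw [this]
    simp only [hℓ]
    linarith
  have hint_ℓsnd : Integrable (fun z : S × T => ℓ z.2) P := by
    have := (integrable_map_measure hℓmeas.aestronglyMeasurable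
      measurable_snd.aemeasurable (μ := P)).1
    apply this
    rw [hmarg]
    exact hint_ℓ
  have hφint : Integrable (fun z => ℓ z.2 + Real.log ((P.rnDeriv Q) z).toReal + (r z - 1)) P :=
    (hint_ℓsnd.add hint).add (hr_int.sub (integrable_const 1))
  have hint_g : Integrable g P := by
    refine Integrable.mono' hφint hg.aestronglyMeasurable ?_
    filter_upwards [hkey] with z hz
    rw [Real.norm_eq_abs, abs_of_nonneg (hg0 z)]
    exact hz
  have hg1 : ∫ z, g z ∂P ≤ (∫ y, ℓ y ∂ν) + L := by
    have h1 : ∫ z, g z ∂P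
        ≤ ∫ z, (ℓ z.2 + Real.log ((P.rnDeriv Q) z).toReal + (r z - 1)) ∂P :=
      integral_mono_ae hint_g hφint hkey
    have h2 : ∫ z, (ℓ z.2 + Real.log ((P.rnDeriv Q) z).toReal + (r z - 1)) ∂P
        = (∫ z, ℓ z.2 ∂P) + L + ((∫ z, r z ∂P) - 1) := by
      have hA : Integrable (fun z : S × T => ℓ z.2 + Real.log ((P.rnDeriv Q) z).toReal) P :=
        hint_ℓsnd.add hint
      have hB : Integrable (fun z : S × T => r z - 1) P := hr_int.sub (integrable_const 1)
      rw [integral_add hA hB, integral_add hint_ℓsnd hint,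
        integral_sub hr_int (integrable_const 1)]
      simp
      rfl
    have h3 : ∫ z, ℓ z.2 ∂P = ∫ y, ℓ y ∂ν := by
      rw [← hmarg, integral_map measurable_snd.aemeasurable hℓmeas.aestronglyMeasurable]
    rw [h2, h3] at h1
    linarith
  -- finish
  have hf_int : Integrable f P := by
    rw [hfg]
    exact hint_g.const_mul lam
  have hflint : (∫⁻ z, ENNReal.ofReal (f z) ∂P : ENNReal) = ENNReal.ofReal (∫ z, f z ∂P) :=
    (ofReal_integral_eq_lintegral_ofReal hf_int (Filter.Eventually.of_forall hf0)).symm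
  have hf1 : ∫ z, f z ∂P = lam * ∫ z, g z ∂P := by
    rw [hfg, integral_const_mul]
  rw [show (∫⁻ y, nnlog (∫⁻ x, ENNReal.ofReal (Real.exp (f (x, y) / lam)) ∂(κ y)) ∂ν)
      = ∫⁻ y, nnlog (Z y) ∂ν from rfl]
  rw [hKL, hflint, hN_eq, ← ENNReal.ofReal_mul hlam.le,
    EReal.coe_ennreal_ofReal, EReal.coe_ennreal_ofReal,
    max_eq_left (integral_nonneg hf0),
    max_eq_left (mul_nonneg hlam.le (integral_nonneg hℓ0)),
    ← EReal.coe_mul, ← EReal.coe_sub, EReal.coe_le_coe_iff, hf1]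
  nlinarith [hg1]

end disint

/-- **Conditional multiplier duality with a fixed marginal.** Let `Q` be a probability measure
on `S × T` with second-coordinate marginal `Q_T` and disintegration kernel `κ` over the second
coordinate. For `λ > 0` and measurable `f ≥ 0`, the supremum over probability measures `P` on
`S × T` with second marginal `Q_T` of `∫ f dP − λ KL(P‖Q)` (which is `−∞` when
`KL(P‖Q) = +∞` and the loss integral is finite, by the `EReal` conventions) equals
`λ ∫_T log (∫_S exp(f(x,y)/λ) κ(y)(dx)) Q_T(dy)`, as an identity in `[0, +∞]`. -/
theorem conditional_multiplier_duality
    {S T : Type*} [MeasurableSpace S] [StandardBorelSpace S]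
    [MeasurableSpace T] [StandardBorelSpace T]
    (Q : Measure (S × T)) [IsProbabilityMeasure Q]
    (κ : Kernel T S) [IsMarkovKernel κ]
    (hκ : ∀ A : Set (S × T), MeasurableSet A →
      Q A = ∫⁻ y, κ y {x | (x, y) ∈ A} ∂(Q.map Prod.snd))
    (lam : ℝ) (hlam : 0 < lam)
    (f : S × T → ℝ) (hfmeas : Measurable f) (hf0 : ∀ z, 0 ≤ f z) :
    sSup {v : EReal | ∃ P : Measure (S × T), IsProbabilityMeasure P ∧
        P.map Prod.snd = Q.map Prod.snd ∧
        v = ((∫⁻ z, ENNReal.ofReal (f z) ∂P : ENNReal) : EReal)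
              - (lam : EReal) * KL P Q}
      = ((ENNReal.ofReal lam *
          ∫⁻ y, nnlog (∫⁻ x, ENNReal.ofReal (Real.exp (f (x, y) / lam)) ∂(κ y))
            ∂(Q.map Prod.snd) : ENNReal) : EReal) := by
  haveI : IsProbabilityMeasure (Q.map Prod.snd) :=
    Measure.isProbabilityMeasure_map measurable_snd.aemeasurable
  apply le_antisymm
  · apply sSup_le
    rintro v ⟨P, hPprob, hmarg, rfl⟩
    exact tilted_upper Q κ hκ lam hlam f hfmeas hf0 P hPprob hmarg
  · -- lower bound via truncations
    set ν := Q.map Prod.snd with hν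
    set G : ℕ → S × T → ℝ := fun n z => min (f z) n / lam with hG
    have hGmeas : ∀ n, Measurable (G n) := fun n =>
      (hfmeas.min measurable_const).div_const lam
    have hG0 : ∀ n z, 0 ≤ G n z := fun n z =>
      div_nonneg (le_min (hf0 z) (Nat.cast_nonneg n)) hlam.le
    have hGc : ∀ n z, G n z ≤ (n : ℝ) / lam := fun n z => by
      show min (f z) (n : ℝ) / lam ≤ (n : ℝ) / lam
      gcongr
      exact min_le_right _ _
    have hGle : ∀ n z, G n z ≤ f z / lam := fun n z => by
      show min (f z) (n : ℝ) / lam ≤ f z / lam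
      gcongr
      exact min_le_left _ _
    have hfG : ∀ n z, lam * G n z ≤ f z := fun n z => by
      show lam * (min (f z) (n : ℝ) / lam) ≤ f z
      rw [mul_comm, div_mul_cancel₀ _ hlam.ne']
      exact min_le_left _ _
    set Zn : ℕ → T → ENNReal :=
      fun n y => ∫⁻ x, ENNReal.ofReal (Real.exp (G n (x, y))) ∂(κ y) with hZn
    have hmonoE : ∀ z, Monotone fun n : ℕ => ENNReal.ofReal (Real.exp (G n z)) := by
      intro z n m hnm
      refine ENNReal.ofReal_le_ofReal (Real.exp_le_exp.2 ?_)
      show min (f z) (n : ℝ) / lam ≤ min (f z) (m : ℝ) / lam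
      have : (n : ℝ) ≤ (m : ℝ) := Nat.cast_le.2 hnm
      gcongr
    have hsupE : ∀ z, (⨆ n : ℕ, ENNReal.ofReal (Real.exp (G n z)))
        = ENNReal.ofReal (Real.exp (f z / lam)) := by
      intro z
      apply le_antisymm
      · exact iSup_le fun n =>
          ENNReal.ofReal_le_ofReal (Real.exp_le_exp.2 (hGle n z))
      · refine le_trans ?_ (le_iSup _ ⌈f z⌉₊)
        have hn : min (f z) (⌈f z⌉₊ : ℝ) = f z := min_eq_left (Nat.le_ceil _)
        show ENNReal.ofReal (Real.exp (f z / lam))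
            ≤ ENNReal.ofReal (Real.exp (min (f z) (⌈f z⌉₊ : ℝ) / lam))
        rw [hn]
    have hZfsup : ∀ y, (∫⁻ x, ENNReal.ofReal (Real.exp (f (x, y) / lam)) ∂(κ y))
        = ⨆ n, Zn n y := by
      intro y
      rw [show (fun x => ENNReal.ofReal (Real.exp (f (x, y) / lam)))
          = fun x => ⨆ n : ℕ, ENNReal.ofReal (Real.exp (G n (x, y))) from
        funext fun x => (hsupE (x, y)).symm]
      exact lintegral_iSup
        (fun n => (ENNReal.measurable_ofReal.comp
          (Real.measurable_exp.comp (hGmeas n))).comp (measurable_id.prodMk measurable_const))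
        (fun n m hnm x => hmonoE (x, y) hnm)
    have hZn1 : ∀ n y, 1 ≤ Zn n y := by
      intro n y
      calc (1 : ENNReal) = ∫⁻ _, 1 ∂(κ y) := by simp
        _ ≤ Zn n y := lintegral_mono fun x => by
            rw [show (1:ENNReal) = ENNReal.ofReal 1 by simp]
            exact ENNReal.ofReal_le_ofReal (Real.one_le_exp (hG0 n _))
    have hZnmeas : ∀ n, Measurable (Zn n) := fun n =>
      Measurable.lintegral_kernel_prod_right'
        (f := fun p : T × S => ENNReal.ofReal (Real.exp (G n (p.2, p.1))))
        ((ENNReal.measurable_ofReal.comp (Real.measurable_exp.comp (hGmeas n))).comp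
          measurable_swap)
    have hZnmono : ∀ y, Monotone fun n => Zn n y := fun y n m hnm =>
      lintegral_mono fun x => hmonoE (x, y) hnm
    have hgoal_eq : (∫⁻ y, nnlog (∫⁻ x, ENNReal.ofReal (Real.exp (f (x, y) / lam)) ∂(κ y)) ∂ν)
        = ⨆ n, ∫⁻ y, nnlog (Zn n y) ∂ν := by
      calc (∫⁻ y, nnlog (∫⁻ x, ENNReal.ofReal (Real.exp (f (x, y) / lam)) ∂(κ y)) ∂ν)
          = ∫⁻ y, ⨆ n, nnlog (Zn n y) ∂ν := by
            refine lintegral_congr fun y => ?_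
            rw [hZfsup y]
            exact nnlog_iSup (hZnmono y) (fun n => hZn1 n y)
        _ = ⨆ n, ∫⁻ y, nnlog (Zn n y) ∂ν :=
            lintegral_iSup (fun n => measurable_nnlog.comp (hZnmeas n))
              (fun n m hnm y => nnlog_mono (hZn1 n y) (hZnmono y hnm))
    rw [hgoal_eq, ENNReal.mul_iSup,
      ereal_coe_iSup (fun n m hnm => mul_le_mul_right
        (lintegral_mono fun y => nnlog_mono (hZn1 n y) (hZnmono y hnm)) _)]
    refine iSup_le fun n => ?_
    obtain ⟨P, h1, h2, h3⟩ := tilted_lower Q κ hκ lam hlam (G n) (hGmeas n) (hG0 n)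
      ((n : ℝ) / lam) (by positivity) (hGc n) f hfmeas hf0 (hfG n)
    exact le_trans h3 (le_sSup ⟨P, h1, h2, rfl⟩)
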